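/- Let P be a convex polygon whose difference body D(P) = P + (-P) is a regular hexagon with side length 1. Then there exists a ∈ [0, 1/2] such that P is obtained from an equilateral triangle with side length 1 + a by cutting off three congruent corner triangles with side length a; equivalently, P has three pairs of parallel sides of lengths a and 1 − a (degenerating to an equilateral triangle with unit side when a = 0). -/

import Mathlib

open Pointwise

noncomputable section

local notation "E2" => EuclideanSpace ℝ (Fin 2)

open RealInnerProductSpace

set_option linter.unreachableTactic false
set_option linter.unusedTactic false
set_option linter.unnecessarySeqFocus false
set_option maxHeartbeats 1000000


private lemma inner2 (x y : E2) : ⟪x, y⟫ = x 0 * y 0 + x 1 * y 1 := by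
  simp [PiLp.inner_apply, Fin.sum_univ_two, RCLike.inner_apply, mul_comm]

/-- In 2D, two vectors orthogonal to the same nonzero vector are parallel. -/
private lemma perp_collinear (u p q : E2) (hu : u ≠ 0) (hq : q ≠ 0)
    (hp1 : ⟪u, p⟫ = 0) (hq1 : ⟪u, q⟫ = 0) : ∃ c : ℝ, p = c • q := by
  rw [inner2] at hp1 hq1
  have hdet : p 0 * q 1 - p 1 * q 0 = 0 := by
    rcases (by
      by_contra h
      push_neg at h
      apply hu
      ext i; fin_cases i <;> simp [h.1, h.2] <;> rfl : u 0 ≠ 0 ∨ u 1 ≠ 0) with h | h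
    · have : u 0 * (p 0 * q 1 - p 1 * q 0) = 0 := by linear_combination q 1 * hp1 - p 1 * hq1
      rcases mul_eq_zero.1 this with h' | h'
      · exact absurd h' h
      · exact h'
    · have : u 1 * (p 0 * q 1 - p 1 * q 0) = 0 := by linear_combination p 0 * hq1 - q 0 * hp1
      rcases mul_eq_zero.1 this with h' | h'
      · exact absurd h' h
      · exact h'
  have hq01 : q 0 ≠ 0 ∨ q 1 ≠ 0 := by
    by_contra h
    push_neg at h
    apply hq
    ext i; fin_cases i <;> simp [h.1, h.2] <;> rfl
  rcases hq01 with h | h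
  · refine ⟨p 0 / q 0, ?_⟩
    ext i
    fin_cases i
    · show p 0 = (p 0 / q 0) * q 0; field_simp
    · show p 1 = (p 0 / q 0) * q 1; field_simp; nlinarith [hdet]
  · refine ⟨p 1 / q 1, ?_⟩
    ext i
    fin_cases i
    · show p 0 = (p 1 / q 1) * q 0; field_simp; nlinarith [hdet]
    · show p 1 = (p 1 / q 1) * q 1; field_simp



private lemma two_point (x y z : E2) (hxx : ⟪x,x⟫ = 1) (hyy : ⟪y,y⟫ = 1) (hzz : ⟪z,z⟫ = 1)
    (hxy : ⟪x,y⟫ = 1/2) (hyz : ⟪y,z⟫ = 1/2) : z = y - x ∨ z = x := by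
  have hyx : ⟪y,x⟫ = 1/2 := by rw [real_inner_comm]; exact hxy
  have hzy : ⟪z,y⟫ = 1/2 := by rw [real_inner_comm]; exact hyz
  have hy0 : y ≠ 0 := fun h => by rw [h] at hyy; simp at hyy
  have hyp : ⟪y, z - (1/2:ℝ) • y⟫ = 0 := by
    rw [inner_sub_right, real_inner_smul_right, hyz, hyy]; norm_num
  have hyq : ⟪y, x - (1/2:ℝ) • y⟫ = 0 := by
    rw [inner_sub_right, real_inner_smul_right, hyx, hyy]; norm_num
  have hqq : ⟪x - (1/2:ℝ) • y, x - (1/2:ℝ) • y⟫ = 3/4 := by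
    simp only [inner_sub_left, inner_sub_right, inner_smul_left, inner_smul_right,
      hxx, hyy, hxy, hyx, RCLike.star_def, starRingEnd_apply, star_trivial]
    norm_num
  have hpp : ⟪z - (1/2:ℝ) • y, z - (1/2:ℝ) • y⟫ = 3/4 := by
    simp only [inner_sub_left, inner_sub_right, inner_smul_left, inner_smul_right,
      hzz, hyy, hyz, hzy, RCLike.star_def, starRingEnd_apply, star_trivial]
    norm_num
  have hq0 : x - (1/2:ℝ) • y ≠ 0 := by
    intro h
    rw [h] at hqq; simp at hqq; norm_num at hqq
  obtain ⟨c, hc⟩ := perp_collinear y _ _ hy0 hq0 hyp hyq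
  have hc2 : c^2 = 1 := by
    have h4 : ⟪z - (1/2:ℝ) • y, z - (1/2:ℝ) • y⟫ = c^2 * ⟪x - (1/2:ℝ) • y, x - (1/2:ℝ) • y⟫ := by
      rw [hc, real_inner_smul_left, real_inner_smul_right]; ring
    rw [hpp, hqq] at h4; linarith
  have h5 : (c - 1) * (c + 1) = 0 := by nlinarith [hc2]
  rcases mul_eq_zero.1 h5 with h | h
  · right
    have hc1 : c = 1 := by linarith
    rw [hc1, one_smul] at hc
    exact sub_left_injective hc
  · left
    have hc1 : c = -1 := by linarith
    rw [hc1] at hc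
    calc z = (z - (1/2:ℝ) • y) + (1/2:ℝ) • y := by module
    _ = (-1 : ℝ) • (x - (1/2:ℝ) • y) + (1/2:ℝ) • y := by rw [hc]
    _ = y - x := by module

private lemma lin_indep (x y : E2) (hxx : ⟪x,x⟫ = 1) (hyy : ⟪y,y⟫ = 1) (hxy : ⟪x,y⟫ = 1/2)
    (a b : ℝ) (h : a • x + b • y = 0) : a = 0 ∧ b = 0 := by
  have hyx : ⟪y,x⟫ = 1/2 := by rw [real_inner_comm]; exact hxy
  have h1 : ⟪x, a • x + b • y⟫ = (0:ℝ) := by rw [h]; simp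
  have h2 : ⟪y, a • x + b • y⟫ = (0:ℝ) := by rw [h]; simp
  simp only [inner_add_right, inner_smul_right, hxx, hyy, hxy, hyx] at h1 h2
  constructor <;> linarith

private lemma eps_le (A B C D : ℝ) (h : ∀ ε : ℝ, 0 < ε → A + ε * B ≤ C + ε * D) : A ≤ C := by
  by_contra hac
  push_neg at hac
  set ε := (A - C) / (2 * (|B| + |D|) + 1) with he
  have hden : 0 < 2 * (|B| + |D|) + 1 := by positivity
  have hε : 0 < ε := div_pos (by linarith) hden
  have h1 := h ε hε
  have hB := neg_abs_le B
  have hD := le_abs_self D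
  have h2 : A - C ≤ ε * (D - B) := by linarith
  have h3 : ε * (D - B) ≤ ε * (|D| + |B|) := by
    apply mul_le_mul_of_nonneg_left _ hε.le
    linarith
  have h4 : ε * (|D| + |B|) < A - C := by
    rw [he, div_mul_eq_mul_div, div_lt_iff₀ hden]
    nlinarith [abs_nonneg B, abs_nonneg D]
  linarith

private lemma hull_inner_le (A : Set E2) (u : E2) (c : ℝ) (hA : ∀ a ∈ A, ⟪u, a⟫ ≤ c) :
    ∀ z ∈ convexHull ℝ A, ⟪u, z⟫ ≤ c := by
  intro z hz
  have hconv : Convex ℝ {w : E2 | ⟪u, w⟫ ≤ c} :=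
    convex_halfSpace_le ⟨fun a b => inner_add_right u a b, fun r a => real_inner_smul_right u a r⟩ c
  exact convexHull_min hA hconv hz

/-- face singleton: if the max over hull of range V is attained strictly only at V k,
then the only point of the hull attaining the max is V k itself. -/
private lemma face_singleton (V : Fin 6 → E2) (u : E2) (k : Fin 6)
    (hstrict : ∀ j, j ≠ k → ⟪u, V j⟫ < ⟪u, V k⟫)
    (z : E2) (hz : z ∈ convexHull ℝ (Set.range V)) (hmax : ⟪u, z⟫ = ⟪u, V k⟫) : z = V k := by
  rw [convexHull_eq] at hz
  obtain ⟨ι, t, w, f, hw0, hw1, hfs, hcm⟩ := hz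
  rw [Finset.centerMass_eq_of_sum_1 _ _ hw1] at hcm
  have hle : ∀ i ∈ t, ⟪u, f i⟫ ≤ ⟪u, V k⟫ := by
    intro i hi
    obtain ⟨j, hj⟩ := hfs i hi
    rw [← hj]
    rcases eq_or_ne j k with rfl | hne
    · exact le_rfl
    · exact (hstrict j hne).le
  have hsum : ∑ i ∈ t, w i * ⟪u, f i⟫ = ⟪u, V k⟫ := by
    rw [← hmax, ← hcm]
    rw [inner_sum]
    congr 1
    ext i
    rw [real_inner_smul_right]
  have hzero : ∀ i ∈ t, w i * (⟪u, V k⟫ - ⟪u, f i⟫) = 0 := by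
    have hnn : ∀ i ∈ t, 0 ≤ w i * (⟪u, V k⟫ - ⟪u, f i⟫) := fun i hi =>
      mul_nonneg (hw0 i hi) (sub_nonneg.2 (hle i hi))
    have hts : ∑ i ∈ t, w i * (⟪u, V k⟫ - ⟪u, f i⟫) = 0 := by
      have he : ∑ i ∈ t, w i * (⟪u, V k⟫ - ⟪u, f i⟫)
          = (∑ i ∈ t, w i) * ⟪u, V k⟫ - ∑ i ∈ t, w i * ⟪u, f i⟫ := by
        rw [Finset.sum_mul, ← Finset.sum_sub_distrib]
        exact Finset.sum_congr rfl fun i _ => by ring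
      rw [he, hw1, hsum]; ring
    exact (Finset.sum_eq_zero_iff_of_nonneg hnn).1 hts
  -- now each i with w i ≠ 0 has f i with inner = max, hence f i = V k
  have hfi : ∀ i ∈ t, w i • f i = w i • V k := by
    intro i hi
    rcases eq_or_ne (w i) 0 with h0 | h0
    · rw [h0]; simp
    · have h1 : ⟪u, V k⟫ - ⟪u, f i⟫ = 0 := by
        rcases mul_eq_zero.1 (hzero i hi) with h | h
        · exact absurd h h0
        · exact h
      obtain ⟨j, hj⟩ := hfs i hi
      have hlt := hstrict j
      rcases eq_or_ne j k with rfl | hne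
      · rw [hj]
      · exfalso; rw [← hj] at h1; have := hstrict j hne; linarith
  calc z = ∑ i ∈ t, w i • f i := hcm.symm
  _ = ∑ i ∈ t, w i • V k := Finset.sum_congr rfl hfi
  _ = (∑ i ∈ t, w i) • V k := by rw [Finset.sum_smul]
  _ = V k := by rw [hw1, one_smul]

private lemma sym_contra (V : Fin 6 → E2) (A : Set E2) (hA : A = convexHull ℝ (Set.range V))
    (hsym : ∀ z ∈ A, -z ∈ A) (c : E2)
    (hg0 : 0 ≤ ⟪c, V 0⟫) (hg1 : 0 ≤ ⟪c, V 1⟫) (hg2 : 0 ≤ ⟪c, V 2⟫)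
    (hg3 : 0 ≤ ⟪c, V 3⟫) (hg4 : 0 ≤ ⟪c, V 4⟫) (hg5 : 0 ≤ ⟪c, V 5⟫) (j₀ : Fin 6)
    (hpos : 0 < ⟪c, V j₀⟫) : False := by
  have hge : ∀ j, 0 ≤ ⟪c, V j⟫ := by
    intro j
    fin_cases j
    · exact hg0
    · exact hg1
    · exact hg2
    · exact hg3
    · exact hg4
    · exact hg5
  have h1 : ∀ z ∈ A, 0 ≤ ⟪c, z⟫ := by
    intro z hz
    rw [hA] at hz
    have hconv : Convex ℝ {w : E2 | 0 ≤ ⟪c, w⟫} :=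
      convex_halfSpace_ge ⟨fun a b => inner_add_right c a b, fun r a => real_inner_smul_right c a r⟩ 0
    exact convexHull_min (by rintro a ⟨j, rfl⟩; exact hge j) hconv hz
  have h2 : V j₀ ∈ A := hA ▸ subset_convexHull ℝ _ (Set.mem_range_self j₀)
  have h3 := h1 _ (hsym _ h2)
  rw [inner_neg_right] at h3
  linarith
private lemma hex_regular (V : Fin 6 → E2) (A : Set E2) (hA : A = convexHull ℝ (Set.range V))
    (hsym : ∀ z ∈ A, -z ∈ A)
    (hnorm : ∀ i, ⟪V i, V i⟫ = 1) (hcons : ∀ i, ⟪V i, V (i+1)⟫ = (1:ℝ)/2) :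
    V 2 = V 1 - V 0 ∧ V 3 = -V 0 ∧ V 4 = -V 1 ∧ V 5 = V 0 - V 1 := by
  have hxx : ⟪V 0, V 0⟫ = (1:ℝ) := hnorm 0
  have hyy : ⟪V 1, V 1⟫ = (1:ℝ) := hnorm 1
  have hxy : ⟪V 0, V 1⟫ = (1:ℝ)/2 := hcons 0
  have hyx : ⟪V 1, V 0⟫ = (1:ℝ)/2 := by rw [real_inner_comm]; exact hxy
  have hD : ∀ i : Fin 6, V (i+2) = V (i+1) - V i ∨ V (i+2) = V i := by
    intro i
    refine two_point (V i) (V (i+1)) (V (i+2)) (hnorm i) (hnorm _) (hnorm _) (hcons i) ?_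
    have h := hcons (i+1); rwa [show i+1+1 = i+2 by rw [add_assoc]; rfl] at h
  have h0 : V 2 = V 1 - V 0 ∨ V 2 = V 0 := by
    have h := hD 0; rwa [show (0:Fin 6)+2 = 2 from rfl, show (0:Fin 6)+1 = 1 from rfl] at h
  have h1 : V 3 = V 2 - V 1 ∨ V 3 = V 1 := by
    have h := hD 1; rwa [show (1:Fin 6)+2 = 3 from rfl, show (1:Fin 6)+1 = 2 from rfl] at h
  have h2 : V 4 = V 3 - V 2 ∨ V 4 = V 2 := by
    have h := hD 2; rwa [show (2:Fin 6)+2 = 4 from rfl, show (2:Fin 6)+1 = 3 from rfl] at h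
  have h3 : V 5 = V 4 - V 3 ∨ V 5 = V 3 := by
    have h := hD 3; rwa [show (3:Fin 6)+2 = 5 from rfl, show (3:Fin 6)+1 = 4 from rfl] at h
  have h4 : V 0 = V 5 - V 4 ∨ V 0 = V 4 := by
    have h := hD 4; rwa [show (4:Fin 6)+2 = 0 from rfl, show (4:Fin 6)+1 = 5 from rfl] at h
  rcases h0 with e2 | e2
  · rcases h1 with e3 | e3
    · rcases h2 with e4 | e4
      · rcases h3 with e5 | e5
        · have hv2 : V 2 = -V 0 + V 1 := by simp only [e2]; try module
          have hv3 : V 3 = -V 0 := by simp only [e3, hv2]; try module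
          have hv4 : V 4 = -V 1 := by simp only [e4, hv2, hv3]; try module
          have hv5 : V 5 = V 0 - V 1 := by simp only [e5, hv2, hv3, hv4]; try module
          exact ⟨by rw [hv2]; try module, by rw [hv3], by rw [hv4], by rw [hv5]⟩
        · have hv2 : V 2 = -V 0 + V 1 := by simp only [e2]; try module
          have hv3 : V 3 = -V 0 := by simp only [e3, hv2]; try module
          have hv4 : V 4 = -V 1 := by simp only [e4, hv2, hv3]; try module
          have hv5 : V 5 = -V 0 := by simp only [e5, hv2, hv3, hv4]; try module
          exfalso
          rcases h4 with e6 | e6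
          · rw [hv5, hv4] at e6
            have b1 := congrArg (fun z : E2 => (⟪V 0, z⟫ : ℝ)) e6
            simp only [inner_sub_right, inner_neg_right, hxx, hyy, hxy, hyx] at b1
            linarith
          · rw [hv4] at e6
            have b1 := congrArg (fun z : E2 => (⟪V 0, z⟫ : ℝ)) e6
            simp only [inner_sub_right, inner_neg_right, hxx, hyy, hxy, hyx] at b1
            linarith
      · rcases h3 with e5 | e5
        · have hv2 : V 2 = -V 0 + V 1 := by simp only [e2]; try module
          have hv3 : V 3 = -V 0 := by simp only [e3, hv2]; try module
          have hv4 : V 4 = -V 0 + V 1 := by simp only [e4, hv2, hv3]; try module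
          have hv5 : V 5 = V 1 := by simp only [e5, hv2, hv3, hv4]; try module
          exfalso
          refine sym_contra V A hA hsym (-V 0 + V 1 + V 1) ?_ ?_ ?_ ?_ ?_ ?_ 1 ?_ <;>
            (simp only [hv2, hv3, hv4, hv5, inner_add_left, inner_sub_left, inner_add_right, inner_sub_right, inner_neg_left, inner_neg_right, hxx, hyy, hxy, hyx]; try norm_num)
        · have hv2 : V 2 = -V 0 + V 1 := by simp only [e2]; try module
          have hv3 : V 3 = -V 0 := by simp only [e3, hv2]; try module
          have hv4 : V 4 = -V 0 + V 1 := by simp only [e4, hv2, hv3]; try module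
          have hv5 : V 5 = -V 0 := by simp only [e5, hv2, hv3, hv4]; try module
          exfalso
          refine sym_contra V A hA hsym (-V 0 + V 1 + V 1) ?_ ?_ ?_ ?_ ?_ ?_ 1 ?_ <;>
            (simp only [hv2, hv3, hv4, hv5, inner_add_left, inner_sub_left, inner_add_right, inner_sub_right, inner_neg_left, inner_neg_right, hxx, hyy, hxy, hyx]; try norm_num)
    · rcases h2 with e4 | e4
      · rcases h3 with e5 | e5
        · have hv2 : V 2 = -V 0 + V 1 := by simp only [e2]; try module
          have hv3 : V 3 = V 1 := by simp only [e3, hv2]; try module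
          have hv4 : V 4 = V 0 := by simp only [e4, hv2, hv3]; try module
          have hv5 : V 5 = V 0 - V 1 := by simp only [e5, hv2, hv3, hv4]; try module
          exfalso
          refine sym_contra V A hA hsym (V 0 + V 1) ?_ ?_ ?_ ?_ ?_ ?_ 0 ?_ <;>
            (simp only [hv2, hv3, hv4, hv5, inner_add_left, inner_sub_left, inner_add_right, inner_sub_right, inner_neg_left, inner_neg_right, hxx, hyy, hxy, hyx]; try norm_num)
        · have hv2 : V 2 = -V 0 + V 1 := by simp only [e2]; try module
          have hv3 : V 3 = V 1 := by simp only [e3, hv2]; try module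
          have hv4 : V 4 = V 0 := by simp only [e4, hv2, hv3]; try module
          have hv5 : V 5 = V 1 := by simp only [e5, hv2, hv3, hv4]; try module
          exfalso
          refine sym_contra V A hA hsym (V 0 + V 1) ?_ ?_ ?_ ?_ ?_ ?_ 0 ?_ <;>
            (simp only [hv2, hv3, hv4, hv5, inner_add_left, inner_sub_left, inner_add_right, inner_sub_right, inner_neg_left, inner_neg_right, hxx, hyy, hxy, hyx]; try norm_num)
      · rcases h3 with e5 | e5
        · have hv2 : V 2 = -V 0 + V 1 := by simp only [e2]; try module
          have hv3 : V 3 = V 1 := by simp only [e3, hv2]; try module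
          have hv4 : V 4 = -V 0 + V 1 := by simp only [e4, hv2, hv3]; try module
          have hv5 : V 5 = -V 0 := by simp only [e5, hv2, hv3, hv4]; try module
          exfalso
          refine sym_contra V A hA hsym (-V 0 + V 1 + V 1) ?_ ?_ ?_ ?_ ?_ ?_ 1 ?_ <;>
            (simp only [hv2, hv3, hv4, hv5, inner_add_left, inner_sub_left, inner_add_right, inner_sub_right, inner_neg_left, inner_neg_right, hxx, hyy, hxy, hyx]; try norm_num)
        · have hv2 : V 2 = -V 0 + V 1 := by simp only [e2]; try module
          have hv3 : V 3 = V 1 := by simp only [e3, hv2]; try module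
          have hv4 : V 4 = -V 0 + V 1 := by simp only [e4, hv2, hv3]; try module
          have hv5 : V 5 = V 1 := by simp only [e5, hv2, hv3, hv4]; try module
          exfalso
          refine sym_contra V A hA hsym (-V 0 + V 1 + V 1) ?_ ?_ ?_ ?_ ?_ ?_ 1 ?_ <;>
            (simp only [hv2, hv3, hv4, hv5, inner_add_left, inner_sub_left, inner_add_right, inner_sub_right, inner_neg_left, inner_neg_right, hxx, hyy, hxy, hyx]; try norm_num)
  · rcases h1 with e3 | e3
    · rcases h2 with e4 | e4
      · rcases h3 with e5 | e5
        · have hv2 : V 2 = V 0 := by simp only [e2]; try module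
          have hv3 : V 3 = V 0 - V 1 := by simp only [e3, hv2]; try module
          have hv4 : V 4 = -V 1 := by simp only [e4, hv2, hv3]; try module
          have hv5 : V 5 = -V 0 := by simp only [e5, hv2, hv3, hv4]; try module
          exfalso
          rcases h4 with e6 | e6
          · rw [hv5, hv4] at e6
            have b1 := congrArg (fun z : E2 => (⟪V 0, z⟫ : ℝ)) e6
            simp only [inner_sub_right, inner_neg_right, hxx, hyy, hxy, hyx] at b1
            linarith
          · rw [hv4] at e6
            have b1 := congrArg (fun z : E2 => (⟪V 0, z⟫ : ℝ)) e6
            simp only [inner_sub_right, inner_neg_right, hxx, hyy, hxy, hyx] at b1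
            linarith
        · have hv2 : V 2 = V 0 := by simp only [e2]; try module
          have hv3 : V 3 = V 0 - V 1 := by simp only [e3, hv2]; try module
          have hv4 : V 4 = -V 1 := by simp only [e4, hv2, hv3]; try module
          have hv5 : V 5 = V 0 - V 1 := by simp only [e5, hv2, hv3, hv4]; try module
          exfalso
          refine sym_contra V A hA hsym (V 0 + V 0 - V 1) ?_ ?_ ?_ ?_ ?_ ?_ 0 ?_ <;>
            (simp only [hv2, hv3, hv4, hv5, inner_add_left, inner_sub_left, inner_add_right, inner_sub_right, inner_neg_left, inner_neg_right, hxx, hyy, hxy, hyx]; try norm_num)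
      · rcases h3 with e5 | e5
        · have hv2 : V 2 = V 0 := by simp only [e2]; try module
          have hv3 : V 3 = V 0 - V 1 := by simp only [e3, hv2]; try module
          have hv4 : V 4 = V 0 := by simp only [e4, hv2, hv3]; try module
          have hv5 : V 5 = V 1 := by simp only [e5, hv2, hv3, hv4]; try module
          exfalso
          refine sym_contra V A hA hsym (V 0) ?_ ?_ ?_ ?_ ?_ ?_ 0 ?_ <;>
            (simp only [hv2, hv3, hv4, hv5, inner_add_left, inner_sub_left, inner_add_right, inner_sub_right, inner_neg_left, inner_neg_right, hxx, hyy, hxy, hyx]; try norm_num)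
        · have hv2 : V 2 = V 0 := by simp only [e2]; try module
          have hv3 : V 3 = V 0 - V 1 := by simp only [e3, hv2]; try module
          have hv4 : V 4 = V 0 := by simp only [e4, hv2, hv3]; try module
          have hv5 : V 5 = V 0 - V 1 := by simp only [e5, hv2, hv3, hv4]; try module
          exfalso
          refine sym_contra V A hA hsym (V 0) ?_ ?_ ?_ ?_ ?_ ?_ 0 ?_ <;>
            (simp only [hv2, hv3, hv4, hv5, inner_add_left, inner_sub_left, inner_add_right, inner_sub_right, inner_neg_left, inner_neg_right, hxx, hyy, hxy, hyx]; try norm_num)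
    · rcases h2 with e4 | e4
      · rcases h3 with e5 | e5
        · have hv2 : V 2 = V 0 := by simp only [e2]; try module
          have hv3 : V 3 = V 1 := by simp only [e3, hv2]; try module
          have hv4 : V 4 = -V 0 + V 1 := by simp only [e4, hv2, hv3]; try module
          have hv5 : V 5 = -V 0 := by simp only [e5, hv2, hv3, hv4]; try module
          exfalso
          refine sym_contra V A hA hsym (-V 0 + V 1 + V 1) ?_ ?_ ?_ ?_ ?_ ?_ 1 ?_ <;>
            (simp only [hv2, hv3, hv4, hv5, inner_add_left, inner_sub_left, inner_add_right, inner_sub_right, inner_neg_left, inner_neg_right, hxx, hyy, hxy, hyx]; try norm_num)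
        · have hv2 : V 2 = V 0 := by simp only [e2]; try module
          have hv3 : V 3 = V 1 := by simp only [e3, hv2]; try module
          have hv4 : V 4 = -V 0 + V 1 := by simp only [e4, hv2, hv3]; try module
          have hv5 : V 5 = V 1 := by simp only [e5, hv2, hv3, hv4]; try module
          exfalso
          refine sym_contra V A hA hsym (V 1) ?_ ?_ ?_ ?_ ?_ ?_ 0 ?_ <;>
            (simp only [hv2, hv3, hv4, hv5, inner_add_left, inner_sub_left, inner_add_right, inner_sub_right, inner_neg_left, inner_neg_right, hxx, hyy, hxy, hyx]; try norm_num)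
      · rcases h3 with e5 | e5
        · have hv2 : V 2 = V 0 := by simp only [e2]; try module
          have hv3 : V 3 = V 1 := by simp only [e3, hv2]; try module
          have hv4 : V 4 = V 0 := by simp only [e4, hv2, hv3]; try module
          have hv5 : V 5 = V 0 - V 1 := by simp only [e5, hv2, hv3, hv4]; try module
          exfalso
          refine sym_contra V A hA hsym (V 0) ?_ ?_ ?_ ?_ ?_ ?_ 0 ?_ <;>
            (simp only [hv2, hv3, hv4, hv5, inner_add_left, inner_sub_left, inner_add_right, inner_sub_right, inner_neg_left, inner_neg_right, hxx, hyy, hxy, hyx]; try norm_num)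
        · have hv2 : V 2 = V 0 := by simp only [e2]; try module
          have hv3 : V 3 = V 1 := by simp only [e3, hv2]; try module
          have hv4 : V 4 = V 0 := by simp only [e4, hv2, hv3]; try module
          have hv5 : V 5 = V 1 := by simp only [e5, hv2, hv3, hv4]; try module
          exfalso
          refine sym_contra V A hA hsym (V 0) ?_ ?_ ?_ ?_ ?_ ?_ 0 ?_ <;>
            (simp only [hv2, hv3, hv4, hv5, inner_add_left, inner_sub_left, inner_add_right, inner_sub_right, inner_neg_left, inner_neg_right, hxx, hyy, hxy, hyx]; try norm_num)


private lemma fin6_forall {Φ : Fin 6 → Prop} (h0 : Φ 0) (h1 : Φ 1) (h2 : Φ 2) (h3 : Φ 3)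
    (h4 : Φ 4) (h5 : Φ 5) : ∀ k, Φ k := by
  intro k; fin_cases k
  exacts [h0, h1, h2, h3, h4, h5]

private lemma main_hex (S : Set E2) (hS : S.Finite) (P : Set E2) (hP : P = convexHull ℝ S)
    (V : Fin 6 → E2) (hH : P + -P = convexHull ℝ (Set.range V))
    (hnorm : ∀ i, ‖V i‖ = 1)
    (hv2 : V 2 = V 1 - V 0) (hv3 : V 3 = -V 0) (hv4 : V 4 = -V 1) (hv5 : V 5 = V 0 - V 1)
    (hxy : ⟪V 0, V 1⟫ = (1:ℝ)/2) :
    ∃ a ∈ Set.Icc (0 : ℝ) (1 / 2), ∃ X Y Z : E2,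
      dist X Y = 1 + a ∧ dist Y Z = 1 + a ∧ dist Z X = 1 + a ∧
      P = convexHull ℝ ({X + (a / (1 + a)) • (Y - X), X + (a / (1 + a)) • (Z - X),
        Y + (a / (1 + a)) • (Z - Y), Y + (a / (1 + a)) • (X - Y),
        Z + (a / (1 + a)) • (X - Z), Z + (a / (1 + a)) • (Y - Z)} : Set E2) := by
  have hxx : ⟪V 0, V 0⟫ = (1:ℝ) := by
    rw [real_inner_self_eq_norm_sq, hnorm 0]; norm_num
  have hyy : ⟪V 1, V 1⟫ = (1:ℝ) := by
    rw [real_inner_self_eq_norm_sq, hnorm 1]; norm_num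
  have hyx : ⟪V 1, V 0⟫ = (1:ℝ)/2 := by rw [real_inner_comm]; exact hxy
  have hPconv : Convex ℝ P := hP ▸ convex_convexHull ℝ S
  have hPcomp : IsCompact P := hP ▸ hS.isCompact_convexHull ℝ
  have hPne : P.Nonempty := by
    have h0 : V 0 ∈ P + -P := hH ▸ subset_convexHull ℝ _ (Set.mem_range_self 0)
    obtain ⟨p, hp, q, hq, -⟩ := Set.mem_add.1 h0
    exact ⟨p, hp⟩
  have hsub : ∀ p ∈ P, ∀ q ∈ P, p - q ∈ convexHull ℝ (Set.range V) := by
    intro p hp q hq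
    rw [← hH]
    exact Set.mem_add.2 ⟨p, hp, -q, Set.neg_mem_neg.2 hq, by abel⟩
  -- inner product tables
  have cone_strict : ∀ k j : Fin 6, j ≠ k → ⟪V k, V j⟫ < ⟪V k, V k⟫ := by
    apply fin6_forall <;> apply fin6_forall <;> intro hne <;>
      first
      | exact absurd rfl hne
      | (simp only [hv2, hv3, hv4, hv5, inner_add_left, inner_sub_left, inner_neg_left,
          inner_add_right, inner_sub_right, inner_neg_right, hxx, hyy, hxy, hyx]; norm_num)
  have T2 : ∀ k j : Fin 6, ⟪V k + V (k+1), V j⟫ ≤ 3/2 := by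
    apply fin6_forall <;> apply fin6_forall <;>
      (simp only [Fin.reduceAdd, hv2, hv3, hv4, hv5, inner_add_left, inner_sub_left,
        inner_neg_left, inner_add_right, inner_sub_right, inner_neg_right,
        hxx, hyy, hxy, hyx] <;> norm_num)
  have T3 : ∀ k : Fin 6, ⟪V k + V (k+1), V k⟫ = 3/2 := by
    apply fin6_forall <;>
      (simp only [Fin.reduceAdd, hv2, hv3, hv4, hv5, inner_add_left, inner_sub_left,
        inner_neg_left, inner_add_right, inner_sub_right, inner_neg_right,
        hxx, hyy, hxy, hyx] <;> norm_num)
  have T4 : ∀ k : Fin 6, ⟪V k + V (k+1), V (k+1)⟫ = 3/2 := by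
    apply fin6_forall <;>
      (simp only [Fin.reduceAdd, hv2, hv3, hv4, hv5, inner_add_left, inner_sub_left,
        inner_neg_left, inner_add_right, inner_sub_right, inner_neg_right,
        hxx, hyy, hxy, hyx] <;> norm_num)
  have T5 : ∀ k : Fin 6, ⟪V (k+1), V (k+1) - V k⟫ = 1/2 := by
    apply fin6_forall <;>
      (simp only [Fin.reduceAdd, hv2, hv3, hv4, hv5, inner_add_left, inner_sub_left,
        inner_neg_left, inner_add_right, inner_sub_right, inner_neg_right,
        hxx, hyy, hxy, hyx] <;> norm_num)
  have T6 : ∀ k : Fin 6, V (k+3) = -V k := by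
    apply fin6_forall <;> simp only [Fin.reduceAdd, hv2, hv3, hv4, hv5] <;> try module
  -- unique maximizers in strict cone directions
  have KEY1 : ∀ (u : E2) (k : Fin 6), (∀ j, j ≠ k → ⟪u, V j⟫ < ⟪u, V k⟫) →
      ∃ p, p ∈ P ∧ p - V k ∈ P ∧ (∀ z ∈ P, ⟪u, z⟫ ≤ ⟪u, p⟫) ∧
        (∀ z ∈ P, ⟪u, p - V k⟫ ≤ ⟪u, z⟫) ∧
        (∀ p', p' ∈ P → (∀ z ∈ P, ⟪u, z⟫ ≤ ⟪u, p'⟫) → p' = p) := by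
    intro u k hstrict
    have hcont : Continuous fun z : E2 => ⟪u, z⟫ := continuous_const.inner continuous_id
    obtain ⟨p, hpP, hpmax⟩ := hPcomp.exists_isMaxOn hPne hcont.continuousOn
    obtain ⟨q, hqP, hqmin⟩ := hPcomp.exists_isMinOn hPne hcont.continuousOn
    rw [isMaxOn_iff] at hpmax
    rw [isMinOn_iff] at hqmin
    have hbound : ∀ z ∈ convexHull ℝ (Set.range V), ⟪u, z⟫ ≤ ⟪u, V k⟫ := by
      apply hull_inner_le
      rintro w ⟨j, rfl⟩
      rcases eq_or_ne j k with rfl | hne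
      · exact le_rfl
      · exact (hstrict j hne).le
    have hVkH : V k ∈ P + -P := hH ▸ subset_convexHull ℝ _ (Set.mem_range_self k)
    obtain ⟨s1, hs1, t1, ht1, hst⟩ := Set.mem_add.1 hVkH
    have hts : -t1 ∈ P := Set.mem_neg.1 ht1
    have hgev : ⟪u, V k⟫ ≤ ⟪u, p⟫ - ⟪u, q⟫ := by
      have h1 := hpmax s1 hs1
      have h2 := hqmin (-t1) hts
      have h3 : ⟪u, V k⟫ = ⟪u, s1⟫ - ⟪u, -t1⟫ := by
        rw [← hst, inner_add_right, inner_neg_right]; ring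
      linarith
    have hpqH := hsub p hpP q hqP
    have hlev : ⟪u, p - q⟫ ≤ ⟪u, V k⟫ := hbound _ hpqH
    have heq : ⟪u, p - q⟫ = ⟪u, V k⟫ := by
      apply le_antisymm hlev
      rw [inner_sub_right]
      linarith
    have hface : p - q = V k := face_singleton V u k hstrict _ hpqH heq
    have hqeq : p - V k = q := by rw [← hface]; abel
    refine ⟨p, hpP, ?_, fun z hz => hpmax z hz, ?_, ?_⟩
    · rw [hqeq]; exact hqP
    · intro z hz
      rw [hqeq]; exact hqmin z hz
    · intro p' hp' hmax'
      have h1 : ⟪u, p'⟫ = ⟪u, p⟫ := le_antisymm (hpmax p' hp') (hmax' p hpP)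
      have hpq' := hsub p' hp' q hqP
      have heq' : ⟪u, p' - q⟫ = ⟪u, V k⟫ := by
        rw [inner_sub_right, h1, ← inner_sub_right, heq]
      have hface' : p' - q = V k := face_singleton V u k hstrict _ hpq' heq'
      have : p' - q = p - q := by rw [hface', hface]
      exact sub_left_injective this
  have hmex : ∀ k : Fin 6, ∃ p, p ∈ P ∧ p - V k ∈ P ∧ (∀ z ∈ P, ⟪V k, z⟫ ≤ ⟪V k, p⟫) ∧
      (∀ z ∈ P, ⟪V k, p - V k⟫ ≤ ⟪V k, z⟫) ∧
      (∀ p', p' ∈ P → (∀ z ∈ P, ⟪V k, z⟫ ≤ ⟪V k, p'⟫) → p' = p) :=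
    fun k => KEY1 (V k) k (fun j hj => cone_strict k j hj)
  choose m hm1 hm2 hm3 hm4 hm5 using hmex
  have key2 : ∀ (u : E2) (k : Fin 6) (p : E2), p ∈ P → p - V k ∈ P →
      (∀ z ∈ P, ⟪u, z⟫ ≤ ⟪u, p⟫) →
      (∀ z ∈ P, ⟪u, p - V k⟫ ≤ ⟪u, z⟫) →
      (∀ p', p' ∈ P → (∀ z ∈ P, ⟪u, z⟫ ≤ ⟪u, p'⟫) → p' = p) → p = m k := by
    intro u k p hpP hpq hmax hmin huniq
    by_contra hne
    have hlt : ⟪u, m k⟫ < ⟪u, p⟫ := by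
      rcases eq_or_lt_of_le (hmax (m k) (hm1 k)) with h | h
      · exact absurd (huniq (m k) (hm1 k) (fun z hz => h ▸ hmax z hz)) (fun hh => hne hh.symm)
      · exact h
    have h2 := hmin (m k - V k) (hm2 k)
    rw [inner_sub_right, inner_sub_right] at h2
    linarith
  have key3 : ∀ (u : E2) (k : Fin 6), (∀ j, ⟪u, V j⟫ ≤ ⟪u, V k⟫) →
      ∀ z ∈ P, ⟪u, z⟫ ≤ ⟪u, m k⟫ := by
    intro u k hle z hz
    refine eps_le ⟪u, z⟫ ⟪V k, z⟫ ⟪u, m k⟫ ⟪V k, m k⟫ ?_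
    intro ε hε
    have hstrict : ∀ j, j ≠ k → ⟪u + ε • V k, V j⟫ < ⟪u + ε • V k, V k⟫ := by
      intro j hj
      rw [inner_add_left, inner_add_left, real_inner_smul_left, real_inner_smul_left]
      have h1 := hle j
      have h2 := cone_strict k j hj
      nlinarith
    obtain ⟨p, hpP, hpq, hmax, hmin, huniq⟩ := KEY1 (u + ε • V k) k hstrict
    have hpm : p = m k := key2 _ k p hpP hpq hmax hmin huniq
    have h3 := hmax z hz
    rw [hpm, inner_add_left, inner_add_left, real_inner_smul_left, real_inner_smul_left] at h3
    linarith
  have hmq : ∀ k : Fin 6, m k - V k = m (k + 3) := by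
    intro k
    apply hm5 (k+3) _ (hm2 k)
    intro z hz
    have h := hm4 k z hz
    rw [T6 k, inner_neg_left, inner_neg_left]
    linarith
  have hperp : ∀ k : Fin 6, ⟪V k + V (k+1), m (k+1) - m k⟫ = 0 := by
    intro k
    have h1 : ∀ z ∈ P, ⟪V k + V (k+1), z⟫ ≤ ⟪V k + V (k+1), m k⟫ :=
      key3 _ k (fun j => by rw [T3 k]; exact T2 k j)
    have h2 : ∀ z ∈ P, ⟪V k + V (k+1), z⟫ ≤ ⟪V k + V (k+1), m (k+1)⟫ :=
      key3 _ (k+1) (fun j => by rw [T4 k]; exact T2 k j)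
    have h3 := h1 (m (k+1)) (hm1 (k+1))
    have h4 := h2 (m k) (hm1 k)
    rw [inner_sub_right]
    linarith
  have hw0 : ∀ k : Fin 6, V (k+1) - V k ≠ 0 := by
    intro k h
    have h5 := T5 k; rw [h, inner_zero_right] at h5; norm_num at h5
  have hu0 : ∀ k : Fin 6, V k + V (k+1) ≠ 0 := by
    intro k h
    have h5 := T3 k; rw [h, inner_zero_left] at h5; norm_num at h5
  have ha : ∀ k : Fin 6, ∃ c : ℝ, m (k+1) - m k = c • (V (k+1) - V k) := by
    intro k
    apply perp_collinear (V k + V (k+1)) _ _ (hu0 k) (hw0 k) (hperp k)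
    rw [inner_sub_right, T3 k, T4 k]; ring
  choose a haeq using ha
  have ha_nonneg : ∀ k, 0 ≤ a k := by
    intro k
    have h1 : 0 ≤ ⟪V (k+1), m (k+1) - m k⟫ := by
      rw [inner_sub_right]
      have := hm3 (k+1) (m k) (hm1 k); linarith
    rw [haeq k, real_inner_smul_right, T5 k] at h1
    linarith
  have hsum : ∀ k : Fin 6, a k + a (k+3) = 1 := by
    intro k
    have h1 := haeq k
    have h2 := haeq (k+3)
    have h3 := hmq k
    have h4 := hmq (k+1)
    rw [show k+1+3 = k+3+1 from add_right_comm k 1 3] at h4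
    have h5 : V (k+3+1) - V (k+3) = -(V (k+1) - V k) := by
      have e1 := T6 k
      have e2 := T6 (k+1)
      rw [show k+1+3 = k+3+1 from add_right_comm k 1 3] at e2
      rw [e2, e1]; module
    rw [h5] at h2
    have h6 : (a k + a (k+3) - 1) • (V (k+1) - V k) = 0 := by
      calc (a k + a (k+3) - 1) • (V (k+1) - V k)
          = a k • (V (k+1) - V k) - a (k+3) • -(V (k+1) - V k) - (V (k+1) - V k) := by module
        _ = (m (k+1) - m k) - (m (k+3+1) - m (k+3)) - (V (k+1) - V k) := by rw [h1, h2]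
        _ = (m (k+1) - m k) - ((m (k+1) - V (k+1)) - (m k - V k)) - (V (k+1) - V k) := by
            rw [h4, h3]
        _ = 0 := by module
    rcases smul_eq_zero.1 h6 with h | h
    · linarith
    · exact absurd h (hw0 k)
  -- P is the hull of the six points m k
  have hKcl : IsClosed (convexHull ℝ (Set.range m)) :=
    ((Set.finite_range m).isCompact_convexHull ℝ).isClosed
  have hPm : P = convexHull ℝ (Set.range m) := by
    apply Set.Subset.antisymm
    · intro z hz
      by_contra hzK
      obtain ⟨f, s, hfs, hsf⟩ :=
        geometric_hahn_banach_closed_point (convex_convexHull ℝ _) hKcl hzK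
      set c := (InnerProductSpace.toDual ℝ (EuclideanSpace ℝ (Fin 2))).symm f with hcdef
      have hc : ∀ v : E2, ⟪c, v⟫ = f v := fun v => InnerProductSpace.toDual_symm_apply
      obtain ⟨k, -, hk⟩ := Finset.exists_max_image Finset.univ (fun j : Fin 6 => ⟪c, V j⟫)
        ⟨0, Finset.mem_univ 0⟩
      have h1 := key3 c k (fun j => hk j (Finset.mem_univ j)) z hz
      have h2 : ⟪c, m k⟫ < s := by
        rw [hc]; exact hfs (m k) (subset_convexHull ℝ _ (Set.mem_range_self k))
      have h3 : s < ⟪c, z⟫ := by rw [hc]; exact hsf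
      linarith
    · exact convexHull_min (by rintro w ⟨k, rfl⟩; exact hm1 k) hPconv
  -- normalized edge relations
  have F0 : m 1 - m 0 = a 0 • (V 1 - V 0) := by
    have h := haeq 0; rwa [show (0:Fin 6)+1 = 1 from rfl] at h
  have F1 : m 2 - m 1 = a 1 • (V 2 - V 1) := by
    have h := haeq 1; rwa [show (1:Fin 6)+1 = 2 from rfl] at h
  have F2 : m 3 - m 2 = a 2 • (V 3 - V 2) := by
    have h := haeq 2; rwa [show (2:Fin 6)+1 = 3 from rfl] at h
  have F3 : m 4 - m 3 = a 3 • (V 4 - V 3) := by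
    have h := haeq 3; rwa [show (3:Fin 6)+1 = 4 from rfl] at h
  have F4 : m 5 - m 4 = a 4 • (V 5 - V 4) := by
    have h := haeq 4; rwa [show (4:Fin 6)+1 = 5 from rfl] at h
  have F5 : m 0 - m 5 = a 5 • (V 0 - V 5) := by
    have h := haeq 5; rwa [show (5:Fin 6)+1 = 0 from rfl] at h
  have hs0 : a 0 + a 3 = 1 := by
    have h := hsum 0; rwa [show (0:Fin 6)+3 = 3 from rfl] at h
  have hs1 : a 1 + a 4 = 1 := by
    have h := hsum 1; rwa [show (1:Fin 6)+3 = 4 from rfl] at h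
  have hs2 : a 2 + a 5 = 1 := by
    have h := hsum 2; rwa [show (2:Fin 6)+3 = 5 from rfl] at h
  have hbig : a 0 • (V 1 - V 0) + a 1 • (V 2 - V 1) + a 2 • (V 3 - V 2) + a 3 • (V 4 - V 3)
      + a 4 • (V 5 - V 4) + a 5 • (V 0 - V 5) = (0 : EuclideanSpace ℝ (Fin 2)) := by
    rw [← F0, ← F1, ← F2, ← F3, ← F4, ← F5]; module
  rw [hv2, hv3, hv4, hv5] at hbig
  have hclose : (a 3 + a 4 - a 0 - a 1) • V 0 + (a 0 + a 5 - a 2 - a 3) • V 1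
      = (0 : EuclideanSpace ℝ (Fin 2)) := by
    rw [← hbig]; module
  obtain ⟨hcc1, hcc2⟩ := lin_indep (V 0) (V 1) hxx hyy hxy _ _ hclose
  have ha1 : a 1 = 1 - a 0 := by linarith
  have ha2 : a 2 = a 0 := by linarith
  have ha3 : a 3 = 1 - a 0 := by linarith
  have ha4 : a 4 = a 0 := by linarith
  have ha5 : a 5 = 1 - a 0 := by linarith
  have ha0le1 : a 0 ≤ 1 := by have := ha_nonneg 3; linarith
  have ha00 := ha_nonneg 0
  -- vertex positions relative to m 0
  have M1 : m 1 = m 0 + a 0 • (V 1 - V 0) := by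
    calc m 1 = (m 1 - m 0) + m 0 := by abel
    _ = a 0 • (V 1 - V 0) + m 0 := by rw [F0]
    _ = m 0 + a 0 • (V 1 - V 0) := by abel
  have M2 : m 2 = m 0 + a 0 • V 1 - V 0 := by
    calc m 2 = (m 2 - m 1) + m 1 := by abel
    _ = a 1 • (V 2 - V 1) + (m 0 + a 0 • (V 1 - V 0)) := by rw [F1, M1]
    _ = m 0 + a 0 • V 1 - V 0 := by rw [hv2, ha1]; module
  have M3 : m 3 = m 0 - V 0 := by
    calc m 3 = (m 3 - m 2) + m 2 := by abel
    _ = a 2 • (V 3 - V 2) + (m 0 + a 0 • V 1 - V 0) := by rw [F2, M2]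
    _ = m 0 - V 0 := by rw [hv3, hv2, ha2]; module
  have M4 : m 4 = m 0 - a 0 • V 0 - (1 - a 0) • V 1 := by
    calc m 4 = (m 4 - m 3) + m 3 := by abel
    _ = a 3 • (V 4 - V 3) + (m 0 - V 0) := by rw [F3, M3]
    _ = m 0 - a 0 • V 0 - (1 - a 0) • V 1 := by rw [hv4, hv3, ha3]; module
  have M5 : m 5 = m 0 - (1 - a 0) • V 1 := by
    calc m 5 = (m 5 - m 4) + m 4 := by abel
    _ = a 4 • (V 5 - V 4) + (m 0 - a 0 • V 0 - (1 - a 0) • V 1) := by rw [F4, M4]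
    _ = m 0 - (1 - a 0) • V 1 := by rw [hv5, hv4, ha4]; module
  -- norms
  have hn0 : ‖V 0‖ = 1 := hnorm 0
  have hn1 : ‖V 1‖ = 1 := hnorm 1
  have hnd : ‖V 1 - V 0‖ = 1 := by
    have hip : ⟪V 1 - V 0, V 1 - V 0⟫ = (1:ℝ) := by
      simp only [inner_sub_left, inner_sub_right, hxx, hyy, hxy, hyx]; norm_num
    have h2 : ‖V 1 - V 0‖^2 = 1 := by rw [← real_inner_self_eq_norm_sq, hip]
    nlinarith [norm_nonneg (V 1 - V 0)]
  have hnd2 : ‖V 0 - V 1‖ = 1 := by rw [← neg_sub, norm_neg, hnd]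
  rcases le_or_gt (a 0) (1/2) with hle12 | hgt12
  · -- case a 0 ≤ 1/2
    have hpos : (0:ℝ) < 1 + a 0 := by linarith
    have hdiv : a 0 / (1 + a 0) * (1 + a 0) = a 0 := by field_simp
    have dYX : (m 2 - a 0 • V 0) - (m 0 + a 0 • V 1) = (1 + a 0) • (-V 0) := by
      rw [M2]; module
    have dZX : (m 4 + a 0 • (V 0 - V 1)) - (m 0 + a 0 • V 1) = (1 + a 0) • (-V 1) := by
      rw [M4]; module
    have dZY : (m 4 + a 0 • (V 0 - V 1)) - (m 2 - a 0 • V 0) = (1 + a 0) • (V 0 - V 1) := by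
      rw [M4, M2]; module
    have dXY : (m 0 + a 0 • V 1) - (m 2 - a 0 • V 0) = (1 + a 0) • V 0 := by
      rw [M2]; module
    have dXZ : (m 0 + a 0 • V 1) - (m 4 + a 0 • (V 0 - V 1)) = (1 + a 0) • V 1 := by
      rw [M4]; module
    have dYZ : (m 2 - a 0 • V 0) - (m 4 + a 0 • (V 0 - V 1)) = (1 + a 0) • (V 1 - V 0) := by
      rw [M4, M2]; module
    have hg1 : (m 0 + a 0 • V 1) + (a 0 / (1 + a 0)) • ((m 2 - a 0 • V 0) - (m 0 + a 0 • V 1))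
        = m 1 := by rw [dYX, smul_smul, hdiv, M1]; module
    have hg2 : (m 0 + a 0 • V 1) + (a 0 / (1 + a 0)) • ((m 4 + a 0 • (V 0 - V 1)) - (m 0 + a 0 • V 1))
        = m 0 := by rw [dZX, smul_smul, hdiv]; module
    have hg3 : (m 2 - a 0 • V 0) + (a 0 / (1 + a 0)) • ((m 4 + a 0 • (V 0 - V 1)) - (m 2 - a 0 • V 0))
        = m 3 := by rw [dZY, smul_smul, hdiv, M3, M2]; module
    have hg4 : (m 2 - a 0 • V 0) + (a 0 / (1 + a 0)) • ((m 0 + a 0 • V 1) - (m 2 - a 0 • V 0))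
        = m 2 := by rw [dXY, smul_smul, hdiv]; module
    have hg5 : (m 4 + a 0 • (V 0 - V 1)) + (a 0 / (1 + a 0)) • ((m 0 + a 0 • V 1) - (m 4 + a 0 • (V 0 - V 1)))
        = m 5 := by rw [dXZ, smul_smul, hdiv, M5, M4]; module
    have hg6 : (m 4 + a 0 • (V 0 - V 1)) + (a 0 / (1 + a 0)) • ((m 2 - a 0 • V 0) - (m 4 + a 0 • (V 0 - V 1)))
        = m 4 := by rw [dYZ, smul_smul, hdiv]; module
    refine ⟨a 0, ⟨ha00, hle12⟩, m 0 + a 0 • V 1, m 2 - a 0 • V 0, m 4 + a 0 • (V 0 - V 1),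
      ?_, ?_, ?_, ?_⟩
    · rw [dist_eq_norm, dXY, norm_smul, Real.norm_eq_abs, hn0, abs_of_nonneg (by linarith)]
      ring
    · rw [dist_eq_norm, dYZ, norm_smul, Real.norm_eq_abs, hnd, abs_of_nonneg (by linarith)]
      ring
    · rw [dist_eq_norm, dZX, norm_smul, Real.norm_eq_abs, norm_neg, hn1,
        abs_of_nonneg (by linarith)]
      ring
    · rw [hPm]
      congr 1
      ext z
      simp only [Set.mem_range, Set.mem_insert_iff, Set.mem_singleton_iff]
      constructor
      · rintro ⟨k, rfl⟩
        fin_cases k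
        · exact Or.inr (Or.inl hg2.symm)
        · exact Or.inl hg1.symm
        · exact Or.inr (Or.inr (Or.inr (Or.inl hg4.symm)))
        · exact Or.inr (Or.inr (Or.inl hg3.symm))
        · exact Or.inr (Or.inr (Or.inr (Or.inr (Or.inr hg6.symm))))
        · exact Or.inr (Or.inr (Or.inr (Or.inr (Or.inl hg5.symm))))
      · rintro (rfl | rfl | rfl | rfl | rfl | rfl)
        exacts [⟨1, hg1.symm⟩, ⟨0, hg2.symm⟩, ⟨3, hg3.symm⟩, ⟨2, hg4.symm⟩, ⟨5, hg5.symm⟩, ⟨4, hg6.symm⟩]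
  · -- case 1/2 < a 0
    have hb0 : (0:ℝ) ≤ 1 - a 0 := by linarith
    have hb12 : 1 - a 0 ≤ 1/2 := by linarith
    have hpos : (0:ℝ) < 1 + (1 - a 0) := by linarith
    have hdiv : (1 - a 0) / (1 + (1 - a 0)) * (1 + (1 - a 0)) = 1 - a 0 := by
      field_simp
    have dYX : (m 3 - (1 - a 0) • V 1) - (m 1 + (1 - a 0) • (V 1 - V 0))
        = (1 + (1 - a 0)) • (-V 1) := by rw [M3, M1]; module
    have dZX : (m 5 + (1 - a 0) • V 0) - (m 1 + (1 - a 0) • (V 1 - V 0))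
        = (1 + (1 - a 0)) • (V 0 - V 1) := by rw [M5, M1]; module
    have dZY : (m 5 + (1 - a 0) • V 0) - (m 3 - (1 - a 0) • V 1)
        = (1 + (1 - a 0)) • V 0 := by rw [M5, M3]; module
    have dXY : (m 1 + (1 - a 0) • (V 1 - V 0)) - (m 3 - (1 - a 0) • V 1)
        = (1 + (1 - a 0)) • V 1 := by rw [M3, M1]; module
    have dXZ : (m 1 + (1 - a 0) • (V 1 - V 0)) - (m 5 + (1 - a 0) • V 0)
        = (1 + (1 - a 0)) • (V 1 - V 0) := by rw [M5, M1]; module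
    have dYZ : (m 3 - (1 - a 0) • V 1) - (m 5 + (1 - a 0) • V 0)
        = (1 + (1 - a 0)) • (-V 0) := by rw [M5, M3]; module
    have hg1 : (m 1 + (1 - a 0) • (V 1 - V 0)) + ((1 - a 0) / (1 + (1 - a 0))) •
        ((m 3 - (1 - a 0) • V 1) - (m 1 + (1 - a 0) • (V 1 - V 0))) = m 2 := by
      rw [dYX, smul_smul, hdiv, M2, M1]; module
    have hg2 : (m 1 + (1 - a 0) • (V 1 - V 0)) + ((1 - a 0) / (1 + (1 - a 0))) •
        ((m 5 + (1 - a 0) • V 0) - (m 1 + (1 - a 0) • (V 1 - V 0))) = m 1 := by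
      rw [dZX, smul_smul, hdiv]; module
    have hg3 : (m 3 - (1 - a 0) • V 1) + ((1 - a 0) / (1 + (1 - a 0))) •
        ((m 5 + (1 - a 0) • V 0) - (m 3 - (1 - a 0) • V 1)) = m 4 := by
      rw [dZY, smul_smul, hdiv, M4, M3]; module
    have hg4 : (m 3 - (1 - a 0) • V 1) + ((1 - a 0) / (1 + (1 - a 0))) •
        ((m 1 + (1 - a 0) • (V 1 - V 0)) - (m 3 - (1 - a 0) • V 1)) = m 3 := by
      rw [dXY, smul_smul, hdiv]; module
    have hg5 : (m 5 + (1 - a 0) • V 0) + ((1 - a 0) / (1 + (1 - a 0))) •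
        ((m 1 + (1 - a 0) • (V 1 - V 0)) - (m 5 + (1 - a 0) • V 0)) = m 0 := by
      rw [dXZ, smul_smul, hdiv, M5]; module
    have hg6 : (m 5 + (1 - a 0) • V 0) + ((1 - a 0) / (1 + (1 - a 0))) •
        ((m 3 - (1 - a 0) • V 1) - (m 5 + (1 - a 0) • V 0)) = m 5 := by
      rw [dYZ, smul_smul, hdiv]; module
    refine ⟨1 - a 0, ⟨hb0, hb12⟩, m 1 + (1 - a 0) • (V 1 - V 0), m 3 - (1 - a 0) • V 1,
      m 5 + (1 - a 0) • V 0, ?_, ?_, ?_, ?_⟩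
    · rw [dist_eq_norm, dXY, norm_smul, Real.norm_eq_abs, hn1, abs_of_nonneg (by linarith)]
      ring
    · rw [dist_eq_norm, dYZ, norm_smul, Real.norm_eq_abs, norm_neg, hn0,
        abs_of_nonneg (by linarith)]
      ring
    · have dZX2 : (m 5 + (1 - a 0) • V 0) - (m 1 + (1 - a 0) • (V 1 - V 0))
          = (1 + (1 - a 0)) • (V 0 - V 1) := dZX
      rw [dist_eq_norm, dZX2, norm_smul, Real.norm_eq_abs, hnd2, abs_of_nonneg (by linarith)]
      ring
    · rw [hPm]
      congr 1
      ext z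
      simp only [Set.mem_range, Set.mem_insert_iff, Set.mem_singleton_iff]
      constructor
      · rintro ⟨k, rfl⟩
        fin_cases k
        · exact Or.inr (Or.inr (Or.inr (Or.inr (Or.inl hg5.symm))))
        · exact Or.inr (Or.inl hg2.symm)
        · exact Or.inl hg1.symm
        · exact Or.inr (Or.inr (Or.inr (Or.inl hg4.symm)))
        · exact Or.inr (Or.inr (Or.inl hg3.symm))
        · exact Or.inr (Or.inr (Or.inr (Or.inr (Or.inr hg6.symm))))
      · rintro (rfl | rfl | rfl | rfl | rfl | rfl)
        exacts [⟨2, hg1.symm⟩, ⟨1, hg2.symm⟩, ⟨4, hg3.symm⟩, ⟨3, hg4.symm⟩, ⟨0, hg5.symm⟩, ⟨5, hg6.symm⟩]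


/-- If the difference body `D(P) = P + (-P)` of a convex polygon `P` is a regular hexagon
with side length `1`, then there is `a ∈ [0, 1/2]` such that `P` is obtained from an
equilateral triangle with side `1 + a` by cutting off three congruent corner triangles with
side `a` (for `a = 0` the polygon `P` is an equilateral triangle with unit side). -/
theorem difference_body_regular_hexagon_structure (S : Set E2) (hS : S.Finite)
    (P : Set E2) (hP : P = convexHull ℝ S)
    (hhex : ∃ V : Fin 6 → E2, P + -P = convexHull ℝ (Set.range V) ∧
      (∀ i, ‖V i‖ = 1) ∧ (∀ i, dist (V i) (V (i + 1)) = 1)) :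
    ∃ a ∈ Set.Icc (0 : ℝ) (1 / 2), ∃ X Y Z : E2,
      dist X Y = 1 + a ∧ dist Y Z = 1 + a ∧ dist Z X = 1 + a ∧
      P = convexHull ℝ ({X + (a / (1 + a)) • (Y - X), X + (a / (1 + a)) • (Z - X),
        Y + (a / (1 + a)) • (Z - Y), Y + (a / (1 + a)) • (X - Y),
        Z + (a / (1 + a)) • (X - Z), Z + (a / (1 + a)) • (Y - Z)} : Set E2) := by
  obtain ⟨V, hH, hnorm, hdist⟩ := hhex
  have hnormI : ∀ i, ⟪V i, V i⟫ = (1:ℝ) := by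
    intro i; rw [real_inner_self_eq_norm_sq, hnorm i]; norm_num
  have hconsI : ∀ i, ⟪V i, V (i+1)⟫ = (1:ℝ)/2 := by
    intro i
    have h2 : ‖V i - V (i+1)‖^2 = 1 := by rw [← dist_eq_norm, hdist i]; norm_num
    rw [← real_inner_self_eq_norm_sq, inner_sub_sub_self] at h2
    have hx := hnormI i
    have hy := hnormI (i+1)
    have hc := real_inner_comm (V i) (V (i+1))
    linarith
  have hsym : ∀ z ∈ P + -P, -z ∈ P + -P := by
    intro z hz
    obtain ⟨p, hp, q, hq, rfl⟩ := Set.mem_add.1 hz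
    exact Set.mem_add.2 ⟨-q, Set.mem_neg.1 hq, -p, Set.neg_mem_neg.2 hp, by abel⟩
  obtain ⟨hv2, hv3, hv4, hv5⟩ := hex_regular V (P + -P) hH hsym hnormI hconsI
  have hxy : ⟪V 0, V 1⟫ = (1:ℝ)/2 := hconsI 0
  exact main_hex S hS P hP V hH hnorm hv2 hv3 hv4 hv5 hxy
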